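/- Let G = (V,E) be a finite simple graph with no isolated vertices. If the independent set game Γ_G is population monotonic, then no two non-pendant edges of type I are incident in G, i.e., no two distinct edges that are each not incident to any pendant edge share a common endpoint. -/

import Mathlib

open Finset

variable {V : Type*} [Fintype V] [DecidableEq V]

/-- `I` is an independent set of the graph `G`. -/
def Indep (G : SimpleGraph V) (I : Finset V) : Prop :=
  ∀ u ∈ I, ∀ v ∈ I, ¬ G.Adj u v

/-- The independence number of `G` restricted to the vertex set `U`,
i.e. `α(G[U])`: the maximum size of an independent set contained in `U`. -/
noncomputable def alphaOn (G : SimpleGraph V) (U : Set V) : ℕ :=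
  sSup {n : ℕ | ∃ I : Finset V, ↑I ⊆ U ∧ Indep G I ∧ I.card = n}

/-- `δ(v)`: the set of edges of `G` incident to the vertex `v`. -/
def incEdges (G : SimpleGraph V) (v : V) : Set (Sym2 V) :=
  {e | e ∈ G.edgeSet ∧ v ∈ e}

/-- `δ(v)` as a finset. -/
def incFinset (G : SimpleGraph V) [DecidableRel G.Adj] (v : V) : Finset (Sym2 V) :=
  G.edgeFinset.filter (fun e => v ∈ e)

/-- `V⟨S⟩`: the set of vertices of `G` all of whose incident edges lie in `S`. -/
def onlyInc (G : SimpleGraph V) (S : Set (Sym2 V)) : Set V :=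
  {v | incEdges G v ⊆ S}

/-- The characteristic function of the independent set game on `G`:
`γ(S) = α(G[V⟨S⟩])`. -/
noncomputable def gammaIS (G : SimpleGraph V) (S : Finset (Sym2 V)) : ℕ :=
  alphaOn G (onlyInc G ↑S)

/-- `x` is a population monotonic allocation scheme (PMAS) of the independent set
game on `G`: it is nonnegative, efficient, and monotone.  Coalitions are the
nonempty subsets of the player set `N = E(G)` (`G.edgeFinset`). -/
def IsPMAS (G : SimpleGraph V) [DecidableRel G.Adj]
    (x : Finset (Sym2 V) → Sym2 V → ℝ) : Prop :=
  (∀ S ⊆ G.edgeFinset, ∀ i ∈ S, 0 ≤ x S i) ∧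
  (∀ S ⊆ G.edgeFinset, S.Nonempty → ∑ i ∈ S, x S i = (gammaIS G S : ℝ)) ∧
  (∀ S T : Finset (Sym2 V), S ⊆ T → T ⊆ G.edgeFinset → S.Nonempty →
    ∀ i ∈ S, x S i ≤ x T i)

/-- An edge of `G` is pendant if one of its endpoints has degree one. -/
def PendantEdge (G : SimpleGraph V) [DecidableRel G.Adj] (e : Sym2 V) : Prop :=
  e ∈ G.edgeSet ∧ ∃ v ∈ e, G.degree v = 1

/-- A non-pendant edge of type I: not incident to any pendant edge. -/
def TypeI (G : SimpleGraph V) [DecidableRel G.Adj] (e : Sym2 V) : Prop :=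
  e ∈ G.edgeSet ∧ ¬ PendantEdge G e ∧
    ∀ f : Sym2 V, PendantEdge G f → ¬ ∃ w : V, w ∈ e ∧ w ∈ f

/-- A non-pendant edge of type II: incident to some pendant edge. -/
def TypeII (G : SimpleGraph V) [DecidableRel G.Adj] (e : Sym2 V) : Prop :=
  e ∈ G.edgeSet ∧ ¬ PendantEdge G e ∧
    ∃ f : Sym2 V, PendantEdge G f ∧ ∃ w : V, w ∈ e ∧ w ∈ f

/-- The vertex `v` has distance at most two to some pendant vertex of `G`. -/
def NearPendant (G : SimpleGraph V) [DecidableRel G.Adj] (v : V) : Prop :=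
  ∃ p : V, G.degree p = 1 ∧ ∃ w : G.Walk v p, w.length ≤ 2

set_option linter.unusedSectionVars false

/-! ### Auxiliary lemmas -/

section Aux

variable (G : SimpleGraph V) [DecidableRel G.Adj]

lemma mem_incFinset_iff {g : Sym2 V} {v : V} :
    g ∈ incFinset G v ↔ g ∈ G.edgeSet ∧ v ∈ g := by
  simp [incFinset, SimpleGraph.mem_edgeFinset]

lemma coe_incFinset (v : V) : (↑(incFinset G v) : Set (Sym2 V)) = incEdges G v := by
  ext g
  simp [incEdges, mem_incFinset_iff]

lemma incFinset_subset (v : V) : incFinset G v ⊆ G.edgeFinset :=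
  Finset.filter_subset _ _

lemma exists_adj (hiso : ∀ v : V, G.degree v ≠ 0) (v : V) : ∃ t, G.Adj v t :=
  (SimpleGraph.degree_pos_iff_exists_adj G v).mp (Nat.pos_of_ne_zero (hiso v))

lemma star_nonempty {v t : V} (h : G.Adj v t) : (incFinset G v).Nonempty :=
  ⟨s(v,t), (mem_incFinset_iff G).mpr ⟨G.mem_edgeSet.mpr h, Sym2.mem_mk_left v t⟩⟩

lemma edge_decomp {g : Sym2 V} {v : V} (hg : g ∈ G.edgeSet) (hv : v ∈ g) :
    ∃ t, G.Adj v t ∧ g = s(v,t) := by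
  induction g with
  | _ p q =>
    rw [SimpleGraph.mem_edgeSet] at hg
    rcases Sym2.mem_iff.mp hv with rfl | rfl
    · exact ⟨q, hg, rfl⟩
    · exact ⟨p, hg.symm, Sym2.eq_swap⟩

lemma bddAbove_indepSet (U : Set V) :
    BddAbove {n : ℕ | ∃ I : Finset V, ↑I ⊆ U ∧ Indep G I ∧ I.card = n} := by
  refine ⟨Fintype.card V, ?_⟩
  rintro n ⟨I, -, -, rfl⟩
  exact (Finset.card_le_univ I).trans_eq Finset.card_univ

lemma le_alphaOn {U : Set V} {I : Finset V} (hI : ↑I ⊆ U) (hInd : Indep G I) :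
    I.card ≤ alphaOn G U :=
  le_csSup (bddAbove_indepSet G U) ⟨I, hI, hInd, rfl⟩

lemma alphaOn_le {U : Set V} {m : ℕ}
    (h : ∀ I : Finset V, ↑I ⊆ U → Indep G I → I.card ≤ m) : alphaOn G U ≤ m := by
  apply csSup_le
  · refine ⟨0, ∅, by simp, ?_, rfl⟩
    intro u hu
    exact absurd hu (Finset.notMem_empty u)
  · rintro n ⟨I, h1, h2, rfl⟩
    exact h I h1 h2

lemma one_le_gammaIS {S : Finset (Sym2 V)} {v : V} (hv : v ∈ onlyInc G ↑S) :
    1 ≤ gammaIS G S := by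
  have hI : (↑({v} : Finset V) : Set V) ⊆ onlyInc G ↑S := by simpa using hv
  have hInd : Indep G {v} := by
    intro p hp q hq
    rw [Finset.mem_singleton] at hp hq
    subst hp; subst hq
    exact fun h => G.ne_of_adj h rfl
  have := le_alphaOn G hI hInd
  simpa [gammaIS] using this

lemma alphaOn_le_one {U : Set V} {C : Set V} (hsub : U ⊆ C)
    (hcl : ∀ p ∈ C, ∀ q ∈ C, p ≠ q → G.Adj p q) : alphaOn G U ≤ 1 := by
  apply alphaOn_le
  intro I hIU hInd
  rw [Finset.card_le_one]
  intro p hp q hq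
  by_contra hne
  exact hInd p hp q hq
    (hcl p (hsub (hIU (Finset.mem_coe.mpr hp))) q (hsub (hIU (Finset.mem_coe.mpr hq))) hne)

lemma star_mem_onlyInc (v : V) : v ∈ onlyInc G ↑(incFinset G v) := by
  intro g hg
  rw [coe_incFinset]
  exact hg

lemma left_mem_onlyInc (a w : V) : a ∈ onlyInc G ↑(incFinset G a ∪ incFinset G w) := by
  intro g hg
  rw [Finset.coe_union, coe_incFinset, coe_incFinset]
  exact Set.mem_union_left _ hg

lemma onlyInc_union_nbrs {a w v : V}
    (hv : v ∈ onlyInc G ↑(incFinset G a ∪ incFinset G w))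
    (hva : v ≠ a) (hvw : v ≠ w) : ∀ t, G.Adj v t → t = a ∨ t = w := by
  intro t ht
  have h1 : s(v,t) ∈ incEdges G v := ⟨G.mem_edgeSet.mpr ht, Sym2.mem_mk_left v t⟩
  have h2 := hv h1
  rw [Finset.coe_union, coe_incFinset, coe_incFinset] at h2
  rcases h2 with h2 | h2
  · rcases Sym2.mem_iff.mp h2.2 with h | h
    · exact absurd h.symm hva
    · exact Or.inl h.symm
  · rcases Sym2.mem_iff.mp h2.2 with h | h
    · exact absurd h.symm hvw
    · exact Or.inr h.symm

lemma star_inter {c w : V} (hcw : G.Adj c w) :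
    incFinset G c ∩ incFinset G w = {s(c,w)} := by
  ext g
  simp only [Finset.mem_inter, mem_incFinset_iff, Finset.mem_singleton]
  constructor
  · rintro ⟨⟨hgE, hcg⟩, ⟨-, hwg⟩⟩
    exact (Sym2.mem_and_mem_iff (G.ne_of_adj hcw)).mp ⟨hcg, hwg⟩
  · rintro rfl
    exact ⟨⟨G.mem_edgeSet.mpr hcw, Sym2.mem_mk_left c w⟩,
      G.mem_edgeSet.mpr hcw, Sym2.mem_mk_right c w⟩

lemma gamma_pair_eq_one {c w : V} (hcw : G.Adj c w)
    (hUc : ∀ v, v ≠ c → v ≠ w → (∀ t, G.Adj v t → t = c ∨ t = w) → False) :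
    gammaIS G (incFinset G c ∪ incFinset G w) = 1 := by
  refine le_antisymm ?_ (one_le_gammaIS G (left_mem_onlyInc G c w))
  refine alphaOn_le_one G (C := {c, w}) ?_ ?_
  · intro v hv
    simp only [Set.mem_insert_iff, Set.mem_singleton_iff]
    by_cases h1 : v = c
    · exact Or.inl h1
    by_cases h2 : v = w
    · exact Or.inr h2
    exact (hUc v h1 h2 (onlyInc_union_nbrs G hv h1 h2)).elim
  · intro p hp q hq hpq
    simp only [Set.mem_insert_iff, Set.mem_singleton_iff] at hp hq
    rcases hp with rfl | rfl <;> rcases hq with rfl | rfl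
    · exact absurd rfl hpq
    · exact hcw
    · exact hcw.symm
    · exact absurd rfl hpq

/-- If a star `δ(c)` lies inside a coalition `T`, any PMAS puts mass at least `1`
on `δ(c)` within `T`. -/
lemma star_sum_le {x : Finset (Sym2 V) → Sym2 V → ℝ} (hx : IsPMAS G x)
    {T : Finset (Sym2 V)} (hT : T ⊆ G.edgeFinset) {c t : V} (hct : G.Adj c t)
    (hsub : incFinset G c ⊆ T) :
    (1:ℝ) ≤ ∑ g ∈ incFinset G c, x T g := by
  obtain ⟨hnn, heff, hmono⟩ := hx
  have hne := star_nonempty G hct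
  have e1 := heff _ (incFinset_subset G c) hne
  have h1 : (1:ℝ) ≤ (gammaIS G (incFinset G c) : ℝ) := by
    exact_mod_cast one_le_gammaIS G (star_mem_onlyInc G c)
  calc (1:ℝ) ≤ (gammaIS G (incFinset G c) : ℝ) := h1
    _ = ∑ g ∈ incFinset G c, x (incFinset G c) g := e1.symm
    _ ≤ ∑ g ∈ incFinset G c, x T g :=
        Finset.sum_le_sum (fun g hg => hmono _ _ hsub hT hne g hg)

/-- In the coalition `δ(c) ∪ δ(w)` for an edge `cw` whose set `U_{cw}` of private
vertices is empty, a PMAS must put all its mass (which is `γ = 1`) on the edge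
`cw`; hence every other edge gets `0`. -/
lemma half {x : Finset (Sym2 V) → Sym2 V → ℝ} (hx : IsPMAS G x)
    {c w : V} (hcw : G.Adj c w)
    (hUc : ∀ v, v ≠ c → v ≠ w → (∀ t, G.Adj v t → t = c ∨ t = w) → False) :
    ∀ g ∈ incFinset G c ∪ incFinset G w, g ≠ s(c,w) →
      x (incFinset G c ∪ incFinset G w) g ≤ 0 := by
  have hxc := hx
  obtain ⟨hnn, heff, hmono⟩ := hx
  have hSsub : incFinset G c ∪ incFinset G w ⊆ G.edgeFinset :=
    Finset.union_subset (incFinset_subset G c) (incFinset_subset G w)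
  have heS : s(c,w) ∈ incFinset G c ∪ incFinset G w :=
    Finset.mem_union_left _
      ((mem_incFinset_iff G).mpr ⟨G.mem_edgeSet.mpr hcw, Sym2.mem_mk_left c w⟩)
  have hSne : (incFinset G c ∪ incFinset G w).Nonempty := ⟨_, heS⟩
  have heffS := heff _ hSsub hSne
  rw [gamma_pair_eq_one G hcw hUc, Nat.cast_one] at heffS
  have hc1 : (1:ℝ) ≤ ∑ g ∈ incFinset G c, x (incFinset G c ∪ incFinset G w) g :=
    star_sum_le G hxc hSsub hcw Finset.subset_union_left
  have hw1 : (1:ℝ) ≤ ∑ g ∈ incFinset G w, x (incFinset G c ∪ incFinset G w) g :=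
    star_sum_le G hxc hSsub hcw.symm Finset.subset_union_right
  have hsui : ∑ i ∈ incFinset G c ∪ incFinset G w,
        x (incFinset G c ∪ incFinset G w) i +
      ∑ i ∈ incFinset G c ∩ incFinset G w, x (incFinset G c ∪ incFinset G w) i =
      ∑ i ∈ incFinset G c, x (incFinset G c ∪ incFinset G w) i +
      ∑ i ∈ incFinset G w, x (incFinset G c ∪ incFinset G w) i :=
    Finset.sum_union_inter
  rw [star_inter G hcw, Finset.sum_singleton] at hsui
  intro g hgS hgne
  have hle : x (incFinset G c ∪ incFinset G w) g ≤
      ∑ g' ∈ (incFinset G c ∪ incFinset G w).erase (s(c,w)),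
        x (incFinset G c ∪ incFinset G w) g' :=
    Finset.single_le_sum
      (fun g' hg' => hnn _ hSsub g' (Finset.mem_of_mem_erase hg'))
      (Finset.mem_erase.mpr ⟨hgne, hgS⟩)
  have herase := Finset.sum_erase_add (incFinset G c ∪ incFinset G w)
    (x (incFinset G c ∪ incFinset G w)) heS
  linarith

/-- **Master lemma.** If `aw` and `bw` are two distinct incident edges and both
`U_{aw}` and `U_{bw}` are empty, then there is no PMAS. -/
lemma master {x : Finset (Sym2 V) → Sym2 V → ℝ} (hx : IsPMAS G x)
    {a b w : V} (hab : a ≠ b) (haw : G.Adj a w) (hbw : G.Adj b w)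
    (hUa : ∀ v, v ≠ a → v ≠ w → (∀ t, G.Adj v t → t = a ∨ t = w) → False)
    (hUb : ∀ v, v ≠ b → v ≠ w → (∀ t, G.Adj v t → t = b ∨ t = w) → False) :
    False := by
  have hxc := hx
  obtain ⟨hnn, heff, hmono⟩ := hx
  have hWsub : incFinset G w ⊆ G.edgeFinset := incFinset_subset G w
  have hWne : (incFinset G w).Nonempty := star_nonempty G haw.symm
  have hef : s(a,w) ≠ s(b,w) := by
    intro h
    rcases Sym2.eq_iff.mp h with ⟨h1, -⟩ | ⟨h1, -⟩
    · exact hab h1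
    · exact G.ne_of_adj haw h1
  have h0 : ∀ g ∈ incFinset G w, x (incFinset G w) g ≤ 0 := by
    intro g hg
    by_cases hge : g = s(a,w)
    · have hm : x (incFinset G w) g ≤ x (incFinset G b ∪ incFinset G w) g :=
        hmono _ _ Finset.subset_union_right
          (Finset.union_subset (incFinset_subset G b) hWsub) hWne g hg
      have hh := half G hxc hbw hUb g (Finset.mem_union_right _ hg) (hge ▸ hef)
      linarith
    · have hm : x (incFinset G w) g ≤ x (incFinset G a ∪ incFinset G w) g :=
        hmono _ _ Finset.subset_union_right
          (Finset.union_subset (incFinset_subset G a) hWsub) hWne g hg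
      have hh := half G hxc haw hUa g (Finset.mem_union_right _ hg) hge
      linarith
  have hsum0 : ∑ g ∈ incFinset G w, x (incFinset G w) g ≤ 0 :=
    Finset.sum_nonpos h0
  have heffW := heff _ hWsub hWne
  have h1W : (1:ℝ) ≤ (gammaIS G (incFinset G w) : ℝ) := by
    exact_mod_cast one_le_gammaIS G (star_mem_onlyInc G w)
  rw [heffW] at hsum0
  linarith

/-- **Counting lemma (singleton case).** If `aw` is an edge, `u ∉ {a,w}` is
adjacent to both `a` and `w` and is the unique vertex all of whose neighbours
lie in `{a,w}`, then there is no PMAS. -/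
lemma t1 {x : Finset (Sym2 V) → Sym2 V → ℝ} (hx : IsPMAS G x)
    {a w u : V} (hua' : u ≠ a) (huw' : u ≠ w)
    (haw : G.Adj a w) (hua : G.Adj u a) (huw : G.Adj u w)
    (humem : ∀ t, G.Adj u t → t = a ∨ t = w)
    (huniq : ∀ v, v ≠ a → v ≠ w → (∀ t, G.Adj v t → t = a ∨ t = w) → v = u) :
    False := by
  have hxc := hx
  obtain ⟨hnn, heff, hmono⟩ := hx
  have hTsub : incFinset G a ∪ incFinset G w ⊆ G.edgeFinset :=
    Finset.union_subset (incFinset_subset G a) (incFinset_subset G w)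
  have heT : s(a,w) ∈ incFinset G a ∪ incFinset G w :=
    Finset.mem_union_left _
      ((mem_incFinset_iff G).mpr ⟨G.mem_edgeSet.mpr haw, Sym2.mem_mk_left a w⟩)
  have hTne : (incFinset G a ∪ incFinset G w).Nonempty := ⟨_, heT⟩
  -- γ(T) = 1
  have hγT : gammaIS G (incFinset G a ∪ incFinset G w) = 1 := by
    refine le_antisymm ?_ (one_le_gammaIS G (left_mem_onlyInc G a w))
    refine alphaOn_le_one G (C := {a, w, u}) ?_ ?_
    · intro v hv
      simp only [Set.mem_insert_iff, Set.mem_singleton_iff]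
      by_cases h1 : v = a
      · exact Or.inl h1
      by_cases h2 : v = w
      · exact Or.inr (Or.inl h2)
      exact Or.inr (Or.inr (huniq v h1 h2 (onlyInc_union_nbrs G hv h1 h2)))
    · intro p hp q hq hpq
      simp only [Set.mem_insert_iff, Set.mem_singleton_iff] at hp hq
      rcases hp with rfl | rfl | rfl <;> rcases hq with rfl | rfl | rfl <;>
        first
          | exact absurd rfl hpq
          | exact haw
          | exact haw.symm
          | exact hua
          | exact hua.symm
          | exact huw
          | exact huw.symm
  -- δ(u) sits inside T, away from the edge aw
  have hD : incFinset G u ⊆ (incFinset G a ∪ incFinset G w).erase (s(a,w)) := by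
    intro g hg
    obtain ⟨hgE, hug⟩ := (mem_incFinset_iff G).mp hg
    obtain ⟨t, hut, rfl⟩ := edge_decomp G hgE hug
    refine Finset.mem_erase.mpr ⟨?_, ?_⟩
    · intro hh
      have hu' : u ∈ s(a,w) := hh ▸ Sym2.mem_mk_left u t
      rcases Sym2.mem_iff.mp hu' with h | h
      · exact hua' h
      · exact huw' h
    · rcases humem t hut with rfl | rfl
      · exact Finset.mem_union_left _
          ((mem_incFinset_iff G).mpr ⟨hgE, Sym2.mem_mk_right _ _⟩)
      · exact Finset.mem_union_right _
          ((mem_incFinset_iff G).mpr ⟨hgE, Sym2.mem_mk_right _ _⟩)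
  have heffT := heff _ hTsub hTne
  rw [hγT, Nat.cast_one] at heffT
  have h1 : (1:ℝ) ≤ ∑ g ∈ incFinset G a, x (incFinset G a ∪ incFinset G w) g :=
    star_sum_le G hxc hTsub haw Finset.subset_union_left
  have h2 : (1:ℝ) ≤ ∑ g ∈ incFinset G w, x (incFinset G a ∪ incFinset G w) g :=
    star_sum_le G hxc hTsub haw.symm Finset.subset_union_right
  have h3 : (1:ℝ) ≤ ∑ g ∈ incFinset G u, x (incFinset G a ∪ incFinset G w) g :=
    star_sum_le G hxc hTsub hua (hD.trans (Finset.erase_subset _ _))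
  have hsui : ∑ i ∈ incFinset G a ∪ incFinset G w,
        x (incFinset G a ∪ incFinset G w) i +
      ∑ i ∈ incFinset G a ∩ incFinset G w, x (incFinset G a ∪ incFinset G w) i =
      ∑ i ∈ incFinset G a, x (incFinset G a ∪ incFinset G w) i +
      ∑ i ∈ incFinset G w, x (incFinset G a ∪ incFinset G w) i :=
    Finset.sum_union_inter
  rw [star_inter G haw, Finset.sum_singleton] at hsui
  have h4 : ∑ g ∈ incFinset G u, x (incFinset G a ∪ incFinset G w) g ≤
      ∑ g ∈ (incFinset G a ∪ incFinset G w).erase (s(a,w)),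
        x (incFinset G a ∪ incFinset G w) g :=
    Finset.sum_le_sum_of_subset_of_nonneg hD
      (fun i hi _ => hnn _ hTsub i (Finset.mem_of_mem_erase hi))
  have h5 := Finset.sum_erase_add (incFinset G a ∪ incFinset G w)
    (x (incFinset G a ∪ incFinset G w)) heT
  linarith

/-- A pendant neighbour of an endpoint of a type I edge is impossible. -/
lemma no_pendant_nbr {e : Sym2 V} (hT : TypeI G e) {c v : V} (hce : c ∈ e)
    (hvc : G.Adj v c) (hall : ∀ t, G.Adj v t → t = c) : False := by
  have hnb : G.neighborFinset v = {c} := by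
    ext t
    simp only [SimpleGraph.mem_neighborFinset, Finset.mem_singleton]
    constructor
    · exact hall t
    · rintro rfl; exact hvc
  have hdeg : G.degree v = 1 := by
    show (G.neighborFinset v).card = 1
    rw [hnb]
    exact Finset.card_singleton c
  have hpend : PendantEdge G s(v,c) :=
    ⟨G.mem_edgeSet.mpr hvc, v, Sym2.mem_mk_left v c, hdeg⟩
  exact hT.2.2 _ hpend ⟨c, hce, Sym2.mem_mk_right v c⟩

/-- **Side lemma.** If `αw` and `βw` are distinct incident edges, endpoints `α`
and `w` have no pendant neighbours, and the set `U_{αw}` is nonempty, then there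
is no PMAS. -/
lemma side (hiso : ∀ v : V, G.degree v ≠ 0)
    {x : Finset (Sym2 V) → Sym2 V → ℝ} (hx : IsPMAS G x) {α β w : V}
    (hne : α ≠ β) (hαw : G.Adj α w) (hβw : G.Adj β w)
    (keyα : ∀ v, G.Adj v α → (∀ t, G.Adj v t → t = α) → False)
    (keyw : ∀ v, G.Adj v w → (∀ t, G.Adj v t → t = w) → False)
    (hU : ∃ u, u ≠ α ∧ u ≠ w ∧ ∀ t, G.Adj u t → t = α ∨ t = w) : False := by
  classical
  obtain ⟨u1, hu1α, hu1w, hu1mem⟩ := hU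
  -- every member of `U_{αw}` is adjacent to both α and w
  have hadj : ∀ u, u ≠ α → u ≠ w → (∀ t, G.Adj u t → t = α ∨ t = w) →
      G.Adj u α ∧ G.Adj u w := by
    intro u h1 h2 h3
    obtain ⟨t0, ht0⟩ := exists_adj G hiso u
    by_cases huα : G.Adj u α
    · refine ⟨huα, ?_⟩
      by_contra huw
      exact keyα u huα (fun t ht => (h3 t ht).resolve_right (fun h => huw (h ▸ ht)))
    · have hall : ∀ t, G.Adj u t → t = w :=
        fun t ht => (h3 t ht).resolve_left (fun h => huα (h ▸ ht))
      have huw : G.Adj u w := (hall t0 ht0) ▸ ht0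
      exact (keyw u huw hall).elim
  by_cases h2 : ∃ u2, (u2 ≠ α ∧ u2 ≠ w ∧ ∀ t, G.Adj u2 t → t = α ∨ t = w) ∧ u2 ≠ u1
  · -- at least two members: apply the master lemma at a pivot `p ∉ {β}`
    obtain ⟨u2, ⟨hu2α, hu2w, hu2mem⟩, hne21⟩ := h2
    have apply_master : ∀ p q : V,
        (p ≠ α ∧ p ≠ w ∧ ∀ t, G.Adj p t → t = α ∨ t = w) →
        (q ≠ α ∧ q ≠ w ∧ ∀ t, G.Adj q t → t = α ∨ t = w) → p ≠ q → p ≠ β → False := by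
      intro p q hp hq hpq hpβ
      obtain ⟨hpα, hpw⟩ := hadj p hp.1 hp.2.1 hp.2.2
      obtain ⟨hqα, hqw⟩ := hadj q hq.1 hq.2.1 hq.2.2
      refine master G hx (a := α) (b := w) (w := p) (G.ne_of_adj hαw) hpα.symm hpw.symm ?_ ?_
      · intro v hvα hvp h3
        by_cases hvp' : G.Adj v p
        · have hvw : v = w := (hp.2.2 v hvp'.symm).resolve_left hvα
          subst hvw
          rcases h3 β hβw.symm with h | h
          · exact hne h.symm
          · exact hpβ h.symm
        · have hall : ∀ t, G.Adj v t → t = α :=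
            fun t ht => (h3 t ht).resolve_right (fun h => hvp' (h ▸ ht))
          obtain ⟨t0, ht0⟩ := exists_adj G hiso v
          exact keyα v ((hall t0 ht0) ▸ ht0) hall
      · intro v hvw hvp h3
        by_cases hvp' : G.Adj v p
        · have hvα : v = α := (hp.2.2 v hvp'.symm).resolve_right hvw
          subst hvα
          rcases h3 q hqα.symm with h | h
          · exact hq.2.1 h
          · exact hpq h.symm
        · have hall : ∀ t, G.Adj v t → t = w :=
            fun t ht => (h3 t ht).resolve_right (fun h => hvp' (h ▸ ht))
          obtain ⟨t0, ht0⟩ := exists_adj G hiso v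
          exact keyw v ((hall t0 ht0) ▸ ht0) hall
    rcases eq_or_ne u1 β with rfl | hu1β
    · exact apply_master u2 u1 ⟨hu2α, hu2w, hu2mem⟩ ⟨hu1α, hu1w, hu1mem⟩ hne21 hne21
    · exact apply_master u1 u2 ⟨hu1α, hu1w, hu1mem⟩ ⟨hu2α, hu2w, hu2mem⟩
        (fun h => hne21 h.symm) hu1β
  · -- `u1` is the unique member: apply the counting lemma
    have huniq : ∀ v, v ≠ α → v ≠ w → (∀ t, G.Adj v t → t = α ∨ t = w) → v = u1 := by
      intro v hv1 hv2 hv3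
      by_contra hne'
      exact h2 ⟨v, ⟨hv1, hv2, hv3⟩, hne'⟩
    obtain ⟨hu1α', hu1w'⟩ := hadj u1 hu1α hu1w hu1mem
    exact t1 G hx hu1α hu1w hαw hu1α' hu1w' hu1mem huniq

end Aux

/-- Lemma 7 of the paper.  If the independent set game on a
graph `G` with no isolated vertices is population monotonic, then no two distinct
non-pendant edges of type I share a common endpoint. -/
theorem stmt_7 (G : SimpleGraph V) [DecidableRel G.Adj]
    (hiso : ∀ v : V, G.degree v ≠ 0)
    (hpm : ∃ x : Finset (Sym2 V) → Sym2 V → ℝ, IsPMAS G x) :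
    ∀ e f : Sym2 V, TypeI G e → TypeI G f → e ≠ f →
      ¬ ∃ w : V, w ∈ e ∧ w ∈ f := by
  obtain ⟨x, hx⟩ := hpm
  rintro e f hTe hTf hef ⟨w, hwe, hwf⟩
  obtain ⟨a, haw, rfl⟩ := edge_decomp G hTe.1 hwe
  obtain ⟨b, hbw, rfl⟩ := edge_decomp G hTf.1 hwf
  have hab : a ≠ b := by
    rintro rfl
    exact hef rfl
  -- no pendant neighbours at a, b, w (from the type I hypotheses)
  have keya : ∀ v, G.Adj v a → (∀ t, G.Adj v t → t = a) → False :=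
    fun v h1 h2 => no_pendant_nbr G hTe (Sym2.mem_mk_right w a) h1 h2
  have keyb : ∀ v, G.Adj v b → (∀ t, G.Adj v t → t = b) → False :=
    fun v h1 h2 => no_pendant_nbr G hTf (Sym2.mem_mk_right w b) h1 h2
  have keyw : ∀ v, G.Adj v w → (∀ t, G.Adj v t → t = w) → False :=
    fun v h1 h2 => no_pendant_nbr G hTe (Sym2.mem_mk_left w a) h1 h2
  by_cases hUa : ∃ u, u ≠ a ∧ u ≠ w ∧ ∀ t, G.Adj u t → t = a ∨ t = w
  · exact side G hiso hx hab haw.symm hbw.symm keya keyw hUa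
  by_cases hUb : ∃ u, u ≠ b ∧ u ≠ w ∧ ∀ t, G.Adj u t → t = b ∨ t = w
  · exact side G hiso hx hab.symm hbw.symm haw.symm keyb keyw hUb
  · exact master G hx hab haw.symm hbw.symm
      (fun v h1 h2 h3 => hUa ⟨v, h1, h2, h3⟩)
      (fun v h1 h2 h3 => hUb ⟨v, h1, h2, h3⟩)
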